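/- Algebraic conformal transformation rule for h₄: let R be an algebraic curvature tensor and H a symmetric bilinear form on an n-dimensional real inner product space (V,g) with n ≥ 4, and let T₂ = h₂·g − cR be the Einstein tensor of R. Then the second Gauss–Bonnet curvature of the algebraic curvature tensor R − gH satisfies h₄(R − gH) = h₄(R) − 2(n−3)·⟨T₂, H⟩ + 2(n−2)(n−3)·σ₂(H). -/

import Mathlib

/-!
Double forms on an `n`-dimensional real inner product space `(V, g)`, represented
by their components with respect to a (fixed) orthonormal basis: a `(p,q)`-double
form is determined by its values on pairs of increasingly ordered tuples of
distinct basis vectors, i.e. by a function `Finset (Fin n) → Finset (Fin n) → ℝ`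
(supported on pairs of sets of cardinalities `p` and `q`).
-/

open Finset

noncomputable section

abbrev DF (n : ℕ) := Finset (Fin n) → Finset (Fin n) → ℝ

namespace DF

variable {n : ℕ}

/-- The sign of the shuffle placing the increasing enumeration of `A` before that of
`B` and reordering increasingly. -/
def shuffleSign (A B : Finset (Fin n)) : ℝ :=
  (-1 : ℝ) ^ ∑ a ∈ A, (B.filter fun b => b < a).card

/-- The exterior product of double forms (Kulkarni–Nomizu type product), in components. -/
def mul (ω θ : DF n) : DF n := fun S T =>
  ∑ A ∈ S.powerset, ∑ C ∈ T.powerset,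
    shuffleSign A (S \ A) * shuffleSign C (T \ C) * ω A C * θ (S \ A) (T \ C)

/-- The `(0,0)`-double form `1`. -/
def one (n : ℕ) : DF n := fun S T => if S = ∅ ∧ T = ∅ then 1 else 0

/-- Powers `ω^k` of a double form with respect to the exterior product. -/
def pow (ω : DF n) : ℕ → DF n
  | 0 => one n
  | k + 1 => mul (pow ω k) ω

/-- The contraction `c ω`, obtained by summing, over an orthonormal basis, the
insertion of the basis vector as first argument in both slots. -/
def contr (ω : DF n) : DF n := fun S T =>
  ∑ i : Fin n,
    if i ∈ S ∨ i ∈ T then 0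
    else shuffleSign {i} S * shuffleSign {i} T * ω (insert i S) (insert i T)

/-- The iterated contraction `c^r`. -/
def contrN (r : ℕ) (ω : DF n) : DF n := contr^[r] ω

/-- The metric `g` as a `(1,1)`-double form (components in an orthonormal basis). -/
def gm (n : ℕ) : DF n := fun S T => if S = T ∧ S.card = 1 then 1 else 0

/-- The inner product of double forms induced by `g`. -/
def dinner (ω θ : DF n) : ℝ :=
  ∑ S : Finset (Fin n), ∑ T : Finset (Fin n), ω S T * θ S T

/-- The scalar given by a `(0,0)`-double form. -/
def toScalar (ω : DF n) : ℝ := ω ∅ ∅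

open scoped Classical in
/-- `σ_k` of a `(1,1)`-double form: the `k`-th elementary symmetric function of the
eigenvalues of the corresponding self-adjoint endomorphism (whose matrix in the
orthonormal basis is the matrix of components). -/
def sigma (k : ℕ) (ω : DF n) : ℝ :=
  if h : (Matrix.of fun i j => ω {i} {j} : Matrix (Fin n) (Fin n) ℝ).IsHermitian then
    ∑ s ∈ Finset.powersetCard k (Finset.univ : Finset (Fin n)), ∏ i ∈ s, h.eigenvalues i
  else 0

/-- `ω` is a `(p,p)`-double form: its components are supported in bidegree `(p,p)`. -/
def IsDeg (p : ℕ) (ω : DF n) : Prop := ∀ S T, ω S T ≠ 0 → S.card = p ∧ T.card = p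

/-- Symmetry of a double form: `ω(a;b) = ω(b;a)`. -/
def IsSymm (ω : DF n) : Prop := ∀ S T, ω S T = ω T S

/-- The first Bianchi identity for a `(p,p)`-double form (in components): the complete
antisymmetrization over the first `p+1` vector arguments vanishes. -/
def FirstBianchi (p : ℕ) (ω : DF n) : Prop :=
  ∀ U T : Finset (Fin n), U.card = p + 1 → T.card = p - 1 →
    ∑ i ∈ U,
      (if i ∈ T then 0
       else shuffleSign {i} (U.erase i) * shuffleSign {i} T * ω (U.erase i) (insert i T)) = 0

end DF

section Geometry

variable {n : ℕ} {V : Type*} [NormedAddCommGroup V] [InnerProductSpace ℝ V]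

/-- The components, in the orthonormal basis `e`, of a `(p,p)`-double form given as a
function of `p + p` vector arguments. -/
def ofForm (e : OrthonormalBasis (Fin n) ℝ V) (p : ℕ)
    (ω : (Fin p → V) → (Fin p → V) → ℝ) : DF n := fun S T =>
  if h : S.card = p ∧ T.card = p then
    ω (fun i => e ((S.orderIsoOfFin h.1 i : Fin n)))
      (fun i => e ((T.orderIsoOfFin h.2 i : Fin n)))
  else 0

/-- The components of a bilinear form, viewed as a `(1,1)`-double form. -/
def ofBilin (e : OrthonormalBasis (Fin n) ℝ V) (b : V → V → ℝ) : DF n :=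
  ofForm e 1 fun x y => b (x 0) (y 0)

/-- The components of a `(2,2)`-double form given as a function of four vectors. -/
def ofCurv (e : OrthonormalBasis (Fin n) ℝ V) (R : V → V → V → V → ℝ) : DF n :=
  ofForm e 2 fun x y => R (x 0) (x 1) (y 0) (y 1)

/-- Bilinearity of a real-valued function of two vector arguments. -/
def IsBilin (b : V → V → ℝ) : Prop :=
  (∀ (c : ℝ) (x x' y : V), b (c • x + x') y = c * b x y + b x' y) ∧
  (∀ (c : ℝ) (x y y' : V), b x (c • y + y') = c * b x y + b x y')

/-- Symmetry of a bilinear form. -/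
def IsSymmBilin (b : V → V → ℝ) : Prop := ∀ x y, b x y = b y x

/-- An algebraic curvature tensor: a multilinear form of four vectors, antisymmetric
in the first two arguments, symmetric under exchange of the two pairs, and satisfying
the first Bianchi identity. -/
structure IsCurv (R : V → V → V → V → ℝ) : Prop where
  linear : ∀ (c : ℝ) (x x' y z w : V), R (c • x + x') y z w = c * R x y z w + R x' y z w
  antisymm : ∀ x y z w, R x y z w = - R y x z w
  pair_symm : ∀ x y z w, R x y z w = R z w x y
  bianchi : ∀ x y z w, R x y z w + R y z x w + R z x y w = 0

/-- Multilinearity of a real-valued function of `p` vector arguments. -/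
def IsMultilinear (p : ℕ) (f : (Fin p → V) → ℝ) : Prop :=
  ∀ (x : Fin p → V) (i : Fin p) (c : ℝ) (u v : V),
    f (Function.update x i (c • u + v)) =
      c * f (Function.update x i u) + f (Function.update x i v)

/-- A function of `p` vector arguments is alternating. -/
def IsAlt (p : ℕ) (f : (Fin p → V) → ℝ) : Prop :=
  ∀ (x : Fin p → V) (i j : Fin p), i ≠ j → x i = x j → f x = 0

/-- A `(p,p)`-double form, as a function of `p + p` vector arguments:
multilinear and alternating in each of the two blocks of arguments. -/
def IsDoubleForm (p : ℕ) (ω : (Fin p → V) → (Fin p → V) → ℝ) : Prop :=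
  (∀ y, IsMultilinear p fun x => ω x y) ∧ (∀ y, IsAlt p fun x => ω x y) ∧
  (∀ x, IsMultilinear p fun y => ω x y) ∧ (∀ x, IsAlt p fun y => ω x y)

/-- Symmetry of a `(p,p)`-double form: `ω(x;y) = ω(y;x)`. -/
def IsSymmForm (p : ℕ) (ω : (Fin p → V) → (Fin p → V) → ℝ) : Prop := ∀ x y, ω x y = ω y x

/-- The first Bianchi identity for a `(p,p)`-double form of vector arguments:
the complete antisymmetrization over the first `p+1` vector arguments vanishes. -/
def FirstBianchiForm (p : ℕ) (hp : 0 < p) (ω : (Fin p → V) → (Fin p → V) → ℝ) : Prop :=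
  ∀ (z : Fin (p + 1) → V) (y : Fin p → V),
    ∑ σ : Equiv.Perm (Fin (p + 1)),
      ((Equiv.Perm.sign σ : ℤ) : ℝ) *
        ω (fun i => z (σ (Fin.castSucc i))) (Function.update y ⟨0, hp⟩ (z (σ (Fin.last p)))) = 0

/-- The scalar curvature `Scal = c²R` of a `(2,2)`-double form (in components). -/
def scalDF {n : ℕ} (Rd : DF n) : ℝ := DF.toScalar (DF.contrN 2 Rd)

/-- The `2k`-th Gauss–Bonnet curvature `h_{2k} = c^{2k} R^k / (2k)!`. -/
def h2kDF {n : ℕ} (k : ℕ) (Rd : DF n) : ℝ :=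
  DF.toScalar (DF.contrN (2 * k) (DF.pow Rd k)) / ((2 * k).factorial : ℝ)

/-- The second Gauss–Bonnet curvature `h₄ = c⁴ R² / 4!`. -/
def h4DF {n : ℕ} (Rd : DF n) : ℝ :=
  DF.toScalar (DF.contrN 4 (DF.pow Rd 2)) / (Nat.factorial 4 : ℝ)

end Geometry

end


namespace DF

variable {n : ℕ}

/-! ### Basic facts about `shuffleSign` -/

lemma shuffleSign_mul_self (A B : Finset (Fin n)) : shuffleSign A B * shuffleSign A B = 1 := by
  rw [shuffleSign, ← pow_add]
  exact Even.neg_one_pow ⟨_, rfl⟩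

lemma shuffleSign_empty_left (B : Finset (Fin n)) : shuffleSign ∅ B = 1 := by
  simp [shuffleSign]

lemma shuffleSign_union_right (A B C : Finset (Fin n)) (h : Disjoint B C) :
    shuffleSign A (B ∪ C) = shuffleSign A B * shuffleSign A C := by
  rw [shuffleSign, shuffleSign, shuffleSign, ← pow_add, ← Finset.sum_add_distrib]
  congr 1
  refine Finset.sum_congr rfl fun a _ => ?_
  rw [Finset.filter_union, Finset.card_union_of_disjoint (Finset.disjoint_filter_filter h)]

lemma shuffleSign_union_left (A B C : Finset (Fin n)) (h : Disjoint A B) :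
    shuffleSign (A ∪ B) C = shuffleSign A C * shuffleSign B C := by
  rw [shuffleSign, shuffleSign, shuffleSign, ← pow_add, Finset.sum_union h]

lemma shuffleSign_cocycle {X Y Z : Finset (Fin n)} (hXY : Disjoint X Y) (hYZ : Disjoint Y Z) :
    shuffleSign X Y * shuffleSign (X ∪ Y) Z = shuffleSign X (Y ∪ Z) * shuffleSign Y Z := by
  rw [shuffleSign_union_left _ _ _ hXY, shuffleSign_union_right _ _ _ hYZ]
  ring

lemma shuffleSign_mul_swap (A B : Finset (Fin n)) (h : Disjoint A B) :
    shuffleSign A B * shuffleSign B A = (-1 : ℝ) ^ (A.card * B.card) := by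
  rw [shuffleSign, shuffleSign, ← pow_add]
  congr 1
  simp_rw [Finset.card_filter]
  rw [Finset.sum_comm (s := B) (t := A)]
  rw [← Finset.sum_add_distrib]
  have : ∀ a ∈ A, ((∑ b ∈ B, if b < a then 1 else 0) + ∑ b ∈ B, if a < b then 1 else 0)
      = B.card := by
    intro a ha
    rw [← Finset.sum_add_distrib, Finset.card_eq_sum_ones]
    refine Finset.sum_congr rfl fun b hb => ?_
    have hab : a ≠ b := fun hab => (Finset.disjoint_left.1 h) ha (hab ▸ hb)
    rcases hab.lt_or_gt with h1 | h1
    · rw [if_neg (asymm h1), if_pos h1]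
    · rw [if_pos h1, if_neg (asymm h1)]
  rw [Finset.sum_congr rfl this, Finset.sum_const, smul_eq_mul]

lemma shuffleSign_comm (A B : Finset (Fin n)) (h : Disjoint A B) :
    shuffleSign B A = (-1 : ℝ) ^ (A.card * B.card) * shuffleSign A B := by
  calc shuffleSign B A = shuffleSign A B * (shuffleSign A B * shuffleSign B A) := by
        rw [← mul_assoc, shuffleSign_mul_self, one_mul]
    _ = _ := by rw [shuffleSign_mul_swap A B h]; ring

lemma neg_one_pow_card_filter_singleton (x y : Fin n) :
    ((-1 : ℝ)) ^ (({x} : Finset (Fin n)).filter fun b => b < y).card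
      = if x < y then -1 else 1 := by
  rw [Finset.filter_singleton]
  by_cases h : x < y <;> simp [h]

lemma shuffleSign_singleton_singleton (i j : Fin n) :
    shuffleSign {i} ({j} : Finset (Fin n)) = if j < i then (-1 : ℝ) else 1 := by
  rw [shuffleSign, Finset.sum_singleton, neg_one_pow_card_filter_singleton]

lemma shuffleSign_pair_singleton {y z : Fin n} (x : Fin n) (hyz : y ≠ z) :
    shuffleSign {y, z} ({x} : Finset (Fin n))
      = (if x < y then (-1 : ℝ) else 1) * (if x < z then (-1 : ℝ) else 1) := by
  rw [shuffleSign, Finset.sum_pair hyz, pow_add,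
    neg_one_pow_card_filter_singleton, neg_one_pow_card_filter_singleton]

end DF

namespace DF

variable {n : ℕ}

/-! ### Algebraic properties of the product -/

lemma one_mul' (ω : DF n) : mul (one n) ω = ω := by
  funext S T
  rw [mul]
  rw [Finset.sum_eq_single_of_mem ∅ (Finset.empty_mem_powerset S) ?_]
  · rw [Finset.sum_eq_single_of_mem ∅ (Finset.empty_mem_powerset T) ?_]
    · rw [one, if_pos ⟨rfl, rfl⟩, shuffleSign_empty_left, shuffleSign_empty_left,
        Finset.sdiff_empty, Finset.sdiff_empty]
      ring
    · intro C _ hC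
      rw [one, if_neg fun h => hC h.2]
      ring
  · intro A _ hA
    refine Finset.sum_eq_zero fun C _ => ?_
    rw [one, if_neg fun h => hA h.1]
    ring

lemma pow_two_eq (ω : DF n) : pow ω 2 = mul ω ω := by
  show mul (mul (one n) ω) ω = mul ω ω
  rw [one_mul']

lemma mul_sub_left (ω₁ ω₂ θ : DF n) : mul (ω₁ - ω₂) θ = mul ω₁ θ - mul ω₂ θ := by
  funext S T
  simp only [mul, Pi.sub_apply, ← Finset.sum_sub_distrib]
  exact Finset.sum_congr rfl fun A _ => Finset.sum_congr rfl fun C _ => by ring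

lemma mul_sub_right (ω θ₁ θ₂ : DF n) : mul ω (θ₁ - θ₂) = mul ω θ₁ - mul ω θ₂ := by
  funext S T
  simp only [mul, Pi.sub_apply, ← Finset.sum_sub_distrib]
  exact Finset.sum_congr rfl fun A _ => Finset.sum_congr rfl fun C _ => by ring

/-! ### Supports -/

lemma isDeg_gm : IsDeg 1 (gm n) := by
  intro S T h
  rw [gm] at h
  split_ifs at h with h1
  · exact ⟨h1.2, h1.1 ▸ h1.2⟩
  · exact absurd rfl h

lemma isDeg_mul {p q : ℕ} {ω θ : DF n} (hω : IsDeg p ω) (hθ : IsDeg q θ) :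
    IsDeg (p + q) (mul ω θ) := by
  intro S T h
  obtain ⟨A, hA, hA2⟩ := Finset.exists_ne_zero_of_sum_ne_zero h
  obtain ⟨C, hC, hC2⟩ := Finset.exists_ne_zero_of_sum_ne_zero hA2
  have h1 : ω A C ≠ 0 := fun hz => hC2 (by rw [hz]; ring)
  have h2 : θ (S \ A) (T \ C) ≠ 0 := fun hz => hC2 (by rw [hz]; ring)
  obtain ⟨e1, e2⟩ := hω _ _ h1
  obtain ⟨f1, f2⟩ := hθ _ _ h2
  have c1 := Finset.card_sdiff_add_card_eq_card (Finset.mem_powerset.1 hA)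
  have c2 := Finset.card_sdiff_add_card_eq_card (Finset.mem_powerset.1 hC)
  omega

lemma isDeg_zero_of_ne {p : ℕ} {ω : DF n} (hω : IsDeg p ω) {S T : Finset (Fin n)}
    (h : S.card ≠ p ∨ T.card ≠ p) : ω S T = 0 := by
  by_contra hz
  obtain ⟨h1, h2⟩ := hω S T hz
  tauto

/-! ### Commutativity and associativity -/

lemma sum_powerset_sdiff (S : Finset (Fin n)) (f : Finset (Fin n) → ℝ) :
    ∑ A ∈ S.powerset, f A = ∑ A ∈ S.powerset, f (S \ A) := by
  refine Finset.sum_nbij' (fun A => S \ A) (fun A => S \ A) ?_ ?_ ?_ ?_ ?_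
  · intro A hA
    exact Finset.mem_powerset.2 (Finset.sdiff_subset)
  · intro A hA
    exact Finset.mem_powerset.2 (Finset.sdiff_subset)
  · intro A hA
    exact Finset.sdiff_sdiff_eq_self (Finset.mem_powerset.1 hA)
  · intro A hA
    exact Finset.sdiff_sdiff_eq_self (Finset.mem_powerset.1 hA)
  · intro A hA
    rw [Finset.sdiff_sdiff_eq_self (Finset.mem_powerset.1 hA)]

lemma mul_comm_of_isDeg {p q : ℕ} {ω θ : DF n} (hω : IsDeg p ω) (hθ : IsDeg q θ) :
    mul ω θ = mul θ ω := by
  funext S T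
  rw [mul, mul]
  rw [sum_powerset_sdiff S (fun A => ∑ C ∈ T.powerset,
    shuffleSign A (S \ A) * shuffleSign C (T \ C) * ω A C * θ (S \ A) (T \ C))]
  refine Finset.sum_congr rfl fun A hA => ?_
  rw [sum_powerset_sdiff T (fun C =>
    shuffleSign (S \ A) (S \ (S \ A)) * shuffleSign C (T \ C) * ω (S \ A) C
      * θ (S \ (S \ A)) (T \ C))]
  refine Finset.sum_congr rfl fun C hC => ?_
  rw [Finset.sdiff_sdiff_eq_self (Finset.mem_powerset.1 hA),
    Finset.sdiff_sdiff_eq_self (Finset.mem_powerset.1 hC)]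
  by_cases hz1 : θ A C = 0
  · rw [hz1]; ring
  by_cases hz2 : ω (S \ A) (T \ C) = 0
  · rw [hz2]; ring
  obtain ⟨e1, e2⟩ := hθ _ _ hz1
  obtain ⟨f1, f2⟩ := hω _ _ hz2
  have d1 : Disjoint A (S \ A) := Finset.disjoint_sdiff
  have d2 : Disjoint C (T \ C) := Finset.disjoint_sdiff
  have hc1 := shuffleSign_comm A (S \ A) d1
  have hc2 := shuffleSign_comm C (T \ C) d2
  rw [hc1, hc2, e1, e2, f1, f2]
  have hone : ((-1 : ℝ)) ^ (q * p) * ((-1 : ℝ)) ^ (q * p) = 1 := by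
    rw [← pow_add]; exact Even.neg_one_pow ⟨_, rfl⟩
  linear_combination (shuffleSign A (S \ A) * shuffleSign C (T \ C) * ω (S \ A) (T \ C)
    * θ A C) * hone

end DF

namespace DF

variable {n : ℕ}

lemma sum_powerset_powerset (S : Finset (Fin n)) (f : Finset (Fin n) → Finset (Fin n) → ℝ) :
    ∑ A ∈ S.powerset, ∑ B ∈ A.powerset, f A B
      = ∑ B ∈ S.powerset, ∑ E ∈ (S \ B).powerset, f (B ∪ E) B := by
  rw [Finset.sum_sigma', Finset.sum_sigma']
  refine Finset.sum_nbij' (fun x => ⟨x.2, x.1 \ x.2⟩) (fun x => ⟨x.1 ∪ x.2, x.1⟩)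
    ?_ ?_ ?_ ?_ ?_
  · rintro ⟨A, B⟩ h
    rw [Finset.mem_sigma, Finset.mem_powerset, Finset.mem_powerset] at h ⊢
    exact ⟨h.2.trans h.1, Finset.sdiff_subset_sdiff h.1 le_rfl⟩
  · rintro ⟨B, E⟩ h
    rw [Finset.mem_sigma, Finset.mem_powerset, Finset.mem_powerset] at h ⊢
    exact ⟨Finset.union_subset h.1 (h.2.trans Finset.sdiff_subset), Finset.subset_union_left⟩
  · rintro ⟨A, B⟩ h
    rw [Finset.mem_sigma, Finset.mem_powerset, Finset.mem_powerset] at h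
    show (⟨B ∪ (A \ B), B⟩ : (_ : Finset (Fin n)) × Finset (Fin n)) = ⟨A, B⟩
    rw [Finset.union_sdiff_of_subset h.2]
  · rintro ⟨B, E⟩ h
    rw [Finset.mem_sigma, Finset.mem_powerset, Finset.mem_powerset] at h
    show (⟨B, (B ∪ E) \ B⟩ : (_ : Finset (Fin n)) × Finset (Fin n)) = ⟨B, E⟩
    rw [Finset.union_sdiff_cancel_left
      (Finset.disjoint_of_subset_right h.2 Finset.disjoint_sdiff)]
  · rintro ⟨A, B⟩ h
    rw [Finset.mem_sigma, Finset.mem_powerset, Finset.mem_powerset] at h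
    show f A B = f (B ∪ (A \ B)) B
    rw [Finset.union_sdiff_of_subset h.2]

lemma mul_assoc' (ω θ ρ : DF n) : mul (mul ω θ) ρ = mul ω (mul θ ρ) := by
  funext S T
  simp only [mul, Finset.sum_mul, Finset.mul_sum]
  -- LHS : ∑ A ⊆ S, ∑ C ⊆ T, ∑ A' ⊆ A, ∑ C' ⊆ C, …
  -- RHS : ∑ B ⊆ S, ∑ D ⊆ T, ∑ E ⊆ S\B, ∑ F ⊆ T\D, …
  -- reorder LHS to ∑ A ∑ A' ∑ C ∑ C'
  rw [show (∑ A ∈ S.powerset, ∑ C ∈ T.powerset, ∑ A' ∈ A.powerset, ∑ C' ∈ C.powerset,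
        shuffleSign A (S \ A) * shuffleSign C (T \ C) *
          (shuffleSign A' (A \ A') * shuffleSign C' (C \ C') * ω A' C' * θ (A \ A') (C \ C')) *
          ρ (S \ A) (T \ C))
      = ∑ A ∈ S.powerset, ∑ A' ∈ A.powerset, ∑ C ∈ T.powerset, ∑ C' ∈ C.powerset,
        shuffleSign A (S \ A) * shuffleSign C (T \ C) *
          (shuffleSign A' (A \ A') * shuffleSign C' (C \ C') * ω A' C' * θ (A \ A') (C \ C')) *
          ρ (S \ A) (T \ C) from
    Finset.sum_congr rfl fun A _ => Finset.sum_comm]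
  rw [sum_powerset_powerset S]
  -- reorder RHS to ∑ B ∑ E ∑ D ∑ F
  rw [show (∑ B ∈ S.powerset, ∑ D ∈ T.powerset,
        ∑ E ∈ (S \ B).powerset, ∑ F ∈ (T \ D).powerset,
        shuffleSign B (S \ B) * shuffleSign D (T \ D) * ω B D *
          (shuffleSign E ((S \ B) \ E) * shuffleSign F ((T \ D) \ F) * θ E F *
            ρ ((S \ B) \ E) ((T \ D) \ F)))
      = ∑ B ∈ S.powerset, ∑ E ∈ (S \ B).powerset, ∑ D ∈ T.powerset, ∑ F ∈ (T \ D).powerset,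
        shuffleSign B (S \ B) * shuffleSign D (T \ D) * ω B D *
          (shuffleSign E ((S \ B) \ E) * shuffleSign F ((T \ D) \ F) * θ E F *
            ρ ((S \ B) \ E) ((T \ D) \ F)) from
    Finset.sum_congr rfl fun B _ => Finset.sum_comm]
  refine Finset.sum_congr rfl fun B hB => Finset.sum_congr rfl fun E hE => ?_
  rw [sum_powerset_powerset T]
  refine Finset.sum_congr rfl fun D hD => Finset.sum_congr rfl fun F hF => ?_
  rw [Finset.mem_powerset] at hB hE hD hF
  -- set identities
  have dBE : Disjoint B E := Finset.disjoint_of_subset_right hE Finset.disjoint_sdiff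
  have dDF : Disjoint D F := Finset.disjoint_of_subset_right hF Finset.disjoint_sdiff
  have s1 : (B ∪ E) \ B = E := Finset.union_sdiff_cancel_left dBE
  have s2 : (D ∪ F) \ D = F := Finset.union_sdiff_cancel_left dDF
  have s3 : S \ (B ∪ E) = (S \ B) \ E := by rw [sdiff_sdiff_left, Finset.sup_eq_union]
  have s4 : T \ (D ∪ F) = (T \ D) \ F := by rw [sdiff_sdiff_left, Finset.sup_eq_union]
  have u1 : E ∪ ((S \ B) \ E) = S \ B := Finset.union_sdiff_of_subset hE
  have u2 : F ∪ ((T \ D) \ F) = T \ D := Finset.union_sdiff_of_subset hF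
  have c1 : shuffleSign B E * shuffleSign (B ∪ E) ((S \ B) \ E)
      = shuffleSign B (S \ B) * shuffleSign E ((S \ B) \ E) := by
    have := shuffleSign_cocycle (X := B) (Y := E) (Z := (S \ B) \ E) dBE Finset.disjoint_sdiff
    rwa [u1] at this
  have c2 : shuffleSign D F * shuffleSign (D ∪ F) ((T \ D) \ F)
      = shuffleSign D (T \ D) * shuffleSign F ((T \ D) \ F) := by
    have := shuffleSign_cocycle (X := D) (Y := F) (Z := (T \ D) \ F) dDF Finset.disjoint_sdiff
    rwa [u2] at this
  rw [s1, s2, s3, s4]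
  linear_combination (shuffleSign D F * shuffleSign (D ∪ F) ((T \ D) \ F) * ω B D * θ E F
      * ρ ((S \ B) \ E) ((T \ D) \ F)) * c1
    + (shuffleSign B (S \ B) * shuffleSign E ((S \ B) \ E) * ω B D * θ E F
      * ρ ((S \ B) \ E) ((T \ D) \ F)) * c2

end DF

namespace DF

variable {n : ℕ}

/-! ### Reindexing sums over `powersetCard` -/

lemma sum_erase_eq_sum_compl (k : ℕ) (f : Finset (Fin n) → Fin n → ℝ) :
    ∑ A ∈ Finset.powersetCard (k + 1) Finset.univ, ∑ x ∈ A, f (A.erase x) x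
      = ∑ B ∈ Finset.powersetCard k Finset.univ, ∑ x ∈ Bᶜ, f B x := by
  rw [Finset.sum_sigma', Finset.sum_sigma']
  refine Finset.sum_nbij' (fun a => ⟨a.1.erase a.2, a.2⟩) (fun b => ⟨insert b.2 b.1, b.2⟩)
    ?_ ?_ ?_ ?_ ?_
  · rintro ⟨A, x⟩ h
    rw [Finset.mem_sigma, Finset.mem_powersetCard_univ] at h
    rw [Finset.mem_sigma, Finset.mem_powersetCard_univ]
    exact ⟨by rw [Finset.card_erase_of_mem h.2, h.1]; rfl,
      Finset.mem_compl.2 (Finset.notMem_erase _ _)⟩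
  · rintro ⟨B, x⟩ h
    rw [Finset.mem_sigma, Finset.mem_powersetCard_univ] at h
    rw [Finset.mem_sigma, Finset.mem_powersetCard_univ]
    exact ⟨by rw [Finset.card_insert_of_notMem (Finset.mem_compl.1 h.2), h.1],
      Finset.mem_insert_self _ _⟩
  · rintro ⟨A, x⟩ h
    rw [Finset.mem_sigma, Finset.mem_powersetCard_univ] at h
    show (⟨insert x (A.erase x), x⟩ : (_ : Finset (Fin n)) × Fin n) = ⟨A, x⟩
    rw [Finset.insert_erase h.2]
  · rintro ⟨B, x⟩ h
    rw [Finset.mem_sigma, Finset.mem_powersetCard_univ] at h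
    show (⟨(insert x B).erase x, x⟩ : (_ : Finset (Fin n)) × Fin n) = ⟨B, x⟩
    rw [Finset.erase_insert (Finset.mem_compl.1 h.2)]
  · rintro ⟨A, x⟩ h
    rfl

lemma sum_insert_param (k : ℕ) (f : Finset (Fin n) → Fin n → ℝ) :
    ∑ A ∈ Finset.powersetCard (k + 1) Finset.univ, ∑ x ∈ A, f A x
      = ∑ B ∈ Finset.powersetCard k Finset.univ, ∑ x ∈ Bᶜ, f (insert x B) x := by
  rw [← sum_erase_eq_sum_compl k (fun B x => f (insert x B) x)]
  exact Finset.sum_congr rfl fun A _ => Finset.sum_congr rfl fun x hx => by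
    rw [Finset.insert_erase hx]

/-- The diagonal sums `∑_{|A|=k} ω(A,A)`. -/
def SkD (k : ℕ) (ω : DF n) : ℝ := ∑ A ∈ Finset.powersetCard k Finset.univ, ω A A

lemma SkD_sub (k : ℕ) (ω θ : DF n) : SkD k (ω - θ) = SkD k ω - SkD k θ := by
  simp [SkD, Finset.sum_sub_distrib]

lemma SkD_add (k : ℕ) (ω θ : DF n) : SkD k (ω + θ) = SkD k ω + SkD k θ := by
  simp [SkD, Finset.sum_add_distrib]

/-! ### Contractions on the diagonal -/

lemma contr_diag (θ : DF n) (S : Finset (Fin n)) :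
    contr θ S S = ∑ x ∈ Sᶜ, θ (insert x S) (insert x S) := by
  rw [contr]
  rw [show (∑ i : Fin n, if i ∈ S ∨ i ∈ S then 0
        else shuffleSign {i} S * shuffleSign {i} S * θ (insert i S) (insert i S))
      = ∑ i : Fin n, if i ∈ Sᶜ then θ (insert i S) (insert i S) else 0 from ?_]
  · rw [Finset.sum_ite_mem, Finset.univ_inter]
  refine Finset.sum_congr rfl fun i _ => ?_
  by_cases h : i ∈ S
  · rw [if_pos (Or.inl h), if_neg (by simpa using h)]
  · rw [if_neg (by simpa using h), if_pos (by simpa using h), shuffleSign_mul_self, one_mul]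

lemma SkD_contr (k : ℕ) (θ : DF n) : SkD k (contr θ) = ((k + 1 : ℕ) : ℝ) * SkD (k + 1) θ := by
  rw [SkD]
  simp_rw [contr_diag]
  rw [← sum_insert_param k (fun A _ => θ A A), SkD, Finset.mul_sum]
  refine Finset.sum_congr rfl fun A hA => ?_
  rw [Finset.sum_const, nsmul_eq_mul, Finset.mem_powersetCard_univ.1 hA]

lemma contrN_empty_eq (k : ℕ) (θ : DF n) :
    contrN k θ ∅ ∅ = (k.factorial : ℝ) * SkD k θ := by
  induction k generalizing θ with
  | zero =>
      rw [contrN, Function.iterate_zero_apply, SkD, Finset.powersetCard_zero,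
        Finset.sum_singleton, Nat.factorial_zero, Nat.cast_one, one_mul]
  | succ k ih =>
      rw [contrN, Function.iterate_succ_apply, ← contrN, ih (contr θ), SkD_contr,
        Nat.factorial_succ, Nat.cast_mul]
      ring

/-! ### Products with `(1,1)`-forms on the diagonal -/

lemma sum_powerset_card_one (A : Finset (Fin n)) (F : Finset (Fin n) → ℝ)
    (hF : ∀ B ⊆ A, B.card ≠ 1 → F B = 0) :
    ∑ B ∈ A.powerset, F B = ∑ x ∈ A, F {x} := by
  rw [← Finset.sum_subset (s₁ := Finset.powersetCard 1 A) (s₂ := A.powerset)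
      (fun B hB => Finset.mem_powerset.2 (Finset.mem_powersetCard.1 hB).1)
      (fun B hB hB1 => hF B (Finset.mem_powerset.1 hB)
        (fun hc => hB1 (Finset.mem_powersetCard.2 ⟨Finset.mem_powerset.1 hB, hc⟩)))]
  rw [Finset.powersetCard_one, Finset.sum_map]
  rfl

lemma mul_gm_diag (ρ : DF n) (A : Finset (Fin n)) :
    mul (gm n) ρ A A = ∑ x ∈ A, ρ (A.erase x) (A.erase x) := by
  rw [mul]
  have key : ∀ B ∈ A.powerset,
      (∑ C ∈ A.powerset, shuffleSign B (A \ B) * shuffleSign C (A \ C) * gm n B C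
        * ρ (A \ B) (A \ C))
      = if B.card = 1 then ρ (A \ B) (A \ B) else 0 := by
    intro B hB
    rw [Finset.sum_eq_single_of_mem B hB ?_]
    · by_cases h1 : B.card = 1
      · rw [if_pos h1, gm, if_pos ⟨rfl, h1⟩, mul_one, shuffleSign_mul_self, one_mul]
      · rw [if_neg h1, gm, if_neg (fun h => h1 h.2), mul_zero, zero_mul]
    · intro C _ hne
      rw [gm, if_neg (fun h => hne h.1.symm), mul_zero, zero_mul]
  rw [Finset.sum_congr rfl key]
  rw [sum_powerset_card_one A _ (fun B _ hc => if_neg hc)]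
  refine Finset.sum_congr rfl fun x hx => ?_
  rw [if_pos (Finset.card_singleton x), ← Finset.erase_eq]

lemma SkD_gm_mul (k : ℕ) (ρ : DF n) :
    SkD (k + 1) (mul (gm n) ρ) = ((n - k : ℕ) : ℝ) * SkD k ρ := by
  rw [SkD]
  simp_rw [mul_gm_diag]
  rw [sum_erase_eq_sum_compl k (fun B _ => ρ B B), SkD, Finset.mul_sum]
  refine Finset.sum_congr rfl fun B hB => ?_
  rw [Finset.sum_const, nsmul_eq_mul, Finset.card_compl,
    Finset.mem_powersetCard_univ.1 hB, Fintype.card_fin]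

lemma mul_diag_of_isDeg_one (ω θ : DF n) (hθ : IsDeg 1 θ) (A : Finset (Fin n)) :
    mul ω θ A A = ∑ x ∈ A, ∑ y ∈ A,
      shuffleSign (A.erase x) {x} * shuffleSign (A.erase y) {y}
        * ω (A.erase x) (A.erase y) * θ {x} {y} := by
  rw [mul]
  rw [sum_powerset_sdiff A (fun B => ∑ C ∈ A.powerset,
    shuffleSign B (A \ B) * shuffleSign C (A \ C) * ω B C * θ (A \ B) (A \ C))]
  have step1 : ∀ B ∈ A.powerset,
      (∑ C ∈ A.powerset, shuffleSign (A \ B) (A \ (A \ B)) * shuffleSign C (A \ C)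
          * ω (A \ B) C * θ (A \ (A \ B)) (A \ C))
      = ∑ C ∈ A.powerset, shuffleSign (A \ B) B * shuffleSign (A \ C) C
          * ω (A \ B) (A \ C) * θ B C := by
    intro B hB
    rw [sum_powerset_sdiff A (fun C => shuffleSign (A \ B) (A \ (A \ B)) * shuffleSign C (A \ C)
        * ω (A \ B) C * θ (A \ (A \ B)) (A \ C))]
    refine Finset.sum_congr rfl fun C hC => ?_
    rw [Finset.sdiff_sdiff_eq_self (Finset.mem_powerset.1 hB),
      Finset.sdiff_sdiff_eq_self (Finset.mem_powerset.1 hC)]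
  rw [Finset.sum_congr rfl step1]
  rw [sum_powerset_card_one A _ ?hzero]
  case hzero =>
    intro B _ hc
    exact Finset.sum_eq_zero fun C _ => by
      rw [isDeg_zero_of_ne hθ (Or.inl hc), mul_zero]
  refine Finset.sum_congr rfl fun x hx => ?_
  rw [sum_powerset_card_one A _ ?hzero2]
  case hzero2 =>
    intro C _ hc
    rw [isDeg_zero_of_ne hθ (Or.inr hc), mul_zero]
  refine Finset.sum_congr rfl fun y hy => ?_
  rw [← Finset.erase_eq, ← Finset.erase_eq]

end DF

section Geom2

variable {n : ℕ} {V : Type*} [NormedAddCommGroup V] [InnerProductSpace ℝ V]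

lemma isDeg_ofForm (e : OrthonormalBasis (Fin n) ℝ V) (p : ℕ)
    (ω : (Fin p → V) → (Fin p → V) → ℝ) : DF.IsDeg p (ofForm e p ω) := by
  intro S T h
  rw [ofForm] at h
  split_ifs at h with h1
  · exact h1
  · exact absurd rfl h

lemma isDeg_ofCurv (e : OrthonormalBasis (Fin n) ℝ V) (R : V → V → V → V → ℝ) :
    DF.IsDeg 2 (ofCurv e R) := isDeg_ofForm e 2 _

lemma isDeg_ofBilin (e : OrthonormalBasis (Fin n) ℝ V) (H : V → V → ℝ) :
    DF.IsDeg 1 (ofBilin e H) := isDeg_ofForm e 1 _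

lemma pair_card {a b : Fin n} (hab : a ≠ b) : ({a, b} : Finset (Fin n)).card = 2 := by
  rw [Finset.card_insert_of_notMem (by simpa using hab), Finset.card_singleton]

lemma orderEmbOfFin_pair {a b : Fin n} (hab : a < b) (h : ({a, b} : Finset (Fin n)).card = 2)
    (i : Fin 2) : ({a, b} : Finset (Fin n)).orderEmbOfFin h i = ![a, b] i := by
  have hmem : ∀ x : Fin 2, (![a, b] : Fin 2 → Fin n) x ∈ ({a, b} : Finset (Fin n)) := by
    intro x; fin_cases x <;> simp
  have hmono : StrictMono (![a, b] : Fin 2 → Fin n) := by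
    intro i j hij
    fin_cases i <;> fin_cases j <;>
      first
        | exact absurd hij (by decide)
        | simpa using hab
  exact (congrFun (Finset.orderEmbOfFin_unique h hmem hmono) i).symm

lemma orderEmbOfFin_single (a : Fin n) (h : ({a} : Finset (Fin n)).card = 1) (i : Fin 1) :
    ({a} : Finset (Fin n)).orderEmbOfFin h i = a := by
  have hmem : ∀ x : Fin 1, (fun _ : Fin 1 => a) x ∈ ({a} : Finset (Fin n)) := by
    intro x; simp
  have hmono : StrictMono (fun _ : Fin 1 => a) := by
    intro i j hij
    exact absurd hij (by omega)
  exact (congrFun (Finset.orderEmbOfFin_unique h hmem hmono) i).symm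

lemma ofBilin_single (e : OrthonormalBasis (Fin n) ℝ V) (H : V → V → ℝ) (j k : Fin n) :
    ofBilin e H {j} {k} = H (e j) (e k) := by
  rw [ofBilin, ofForm]
  rw [dif_pos ⟨Finset.card_singleton j, Finset.card_singleton k⟩]
  show H (e ((({j} : Finset (Fin n)).orderIsoOfFin _ 0 : Fin n)))
    (e ((({k} : Finset (Fin n)).orderIsoOfFin _ 0 : Fin n))) = _
  rw [Finset.coe_orderIsoOfFin_apply, Finset.coe_orderIsoOfFin_apply,
    orderEmbOfFin_single, orderEmbOfFin_single]

lemma ofCurv_sorted (e : OrthonormalBasis (Fin n) ℝ V) (R : V → V → V → V → ℝ)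
    {a b c d : Fin n} (hab : a < b) (hcd : c < d) :
    ofCurv e R {a, b} {c, d} = R (e a) (e b) (e c) (e d) := by
  have h1 := pair_card hab.ne
  have h2 := pair_card hcd.ne
  rw [ofCurv, ofForm, dif_pos ⟨h1, h2⟩]
  show R (e ((({a, b} : Finset (Fin n)).orderIsoOfFin _ 0 : Fin n)))
      (e ((({a, b} : Finset (Fin n)).orderIsoOfFin _ 1 : Fin n)))
      (e ((({c, d} : Finset (Fin n)).orderIsoOfFin _ 0 : Fin n)))
      (e ((({c, d} : Finset (Fin n)).orderIsoOfFin _ 1 : Fin n))) = _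
  simp only [Finset.coe_orderIsoOfFin_apply]
  rw [orderEmbOfFin_pair hab, orderEmbOfFin_pair hab, orderEmbOfFin_pair hcd,
    orderEmbOfFin_pair hcd]
  simp

end Geom2

section Geom3

variable {n : ℕ} {V : Type*} [NormedAddCommGroup V] [InnerProductSpace ℝ V]
variable {R : V → V → V → V → ℝ}

lemma r_swap2 (hR : IsCurv R) (x y z w : V) : R x y w z = - R x y z w := by
  rw [hR.pair_symm x y w z, hR.antisymm w z x y, hR.pair_symm z w x y]

lemma r_zero1 (hR : IsCurv R) (x z w : V) : R x x z w = 0 := by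
  have := hR.antisymm x x z w
  linarith

lemma r_zero2 (hR : IsCurv R) (x y z : V) : R x y z z = 0 := by
  have := r_swap2 hR x y z z
  linarith

lemma ofCurv_pair (e : OrthonormalBasis (Fin n) ℝ V) (hR : IsCurv R) {a b c d : Fin n}
    (hab : a ≠ b) (hcd : c ≠ d) :
    ofCurv e R {a, b} {c, d}
      = (if b < a then (-1 : ℝ) else 1) * (if d < c then (-1 : ℝ) else 1)
          * R (e a) (e b) (e c) (e d) := by
  rcases hab.lt_or_gt with h1 | h1 <;> rcases hcd.lt_or_gt with h2 | h2
  · rw [ofCurv_sorted e R h1 h2, if_neg (asymm h1), if_neg (asymm h2)]; ring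
  · rw [Finset.pair_comm c d, ofCurv_sorted e R h1 h2, if_neg (asymm h1), if_pos h2,
      show R (e a) (e b) (e d) (e c) = - R (e a) (e b) (e c) (e d) from r_swap2 hR _ _ _ _]
    ring
  · rw [Finset.pair_comm a b, ofCurv_sorted e R h1 h2, if_pos h1, if_neg (asymm h2),
      show R (e b) (e a) (e c) (e d) = - R (e a) (e b) (e c) (e d) from hR.antisymm _ _ _ _]
    ring
  · rw [Finset.pair_comm a b, Finset.pair_comm c d, ofCurv_sorted e R h1 h2, if_pos h1,
      if_pos h2,
      show R (e b) (e a) (e d) (e c) = R (e a) (e b) (e c) (e d) by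
        rw [hR.antisymm (e b) (e a) (e d) (e c), r_swap2 hR (e a) (e b) (e c) (e d)]; ring]
    ring

lemma contr_ofCurv (e : OrthonormalBasis (Fin n) ℝ V) (hR : IsCurv R) (j k : Fin n) :
    DF.contr (ofCurv e R) {j} {k} = ∑ i, R (e i) (e j) (e i) (e k) := by
  rw [DF.contr]
  refine Finset.sum_congr rfl fun i _ => ?_
  by_cases h : i = j ∨ i = k
  · rw [if_pos (by simpa using h)]
    rcases h with h | h
    · subst h; rw [r_zero1 hR]
    · subst h; rw [r_zero2 hR]
  · push_neg at h
    rw [if_neg (by simpa using h)]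
    rw [show insert i ({j} : Finset (Fin n)) = {i, j} from rfl,
      show insert i ({k} : Finset (Fin n)) = {i, k} from rfl,
      ofCurv_pair e hR h.1 h.2, DF.shuffleSign_singleton_singleton,
      DF.shuffleSign_singleton_singleton]
    by_cases h1 : j < i <;> by_cases h2 : k < i <;> simp [h1, h2]

lemma scalDF_eq_SkD (θ : DF n) : scalDF θ = 2 * DF.SkD 2 θ := by
  rw [scalDF, DF.toScalar, DF.contrN_empty_eq]
  norm_num

lemma h4DF_eq_SkD (θ : DF n) : h4DF θ = DF.SkD 4 (DF.mul θ θ) := by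
  rw [h4DF, DF.pow_two_eq, DF.toScalar, DF.contrN_empty_eq,
    show ((Nat.factorial 4 : ℕ) : ℝ) = 24 by norm_num [Nat.factorial]]
  ring

lemma sum_finset_singletons (f : Finset (Fin n) → ℝ) (hf : ∀ S, S.card ≠ 1 → f S = 0) :
    ∑ S : Finset (Fin n), f S = ∑ j : Fin n, f {j} := by
  rw [← Finset.sum_subset (Finset.subset_univ ((Finset.univ : Finset (Fin n)).map
      ⟨fun j => ({j} : Finset (Fin n)), fun a b hab => by simpa using hab⟩)) ?_]
  · rw [Finset.sum_map]; rfl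
  · intro S _ hS
    refine hf S fun hc => hS ?_
    obtain ⟨x, rfl⟩ := Finset.card_eq_one.1 hc
    simp
    exact ⟨x, rfl⟩

lemma gm_single (j k : Fin n) : DF.gm n {j} {k} = if j = k then (1 : ℝ) else 0 := by
  rw [DF.gm]
  by_cases h : j = k
  · rw [if_pos h, if_pos ⟨by rw [h], Finset.card_singleton j⟩]
  · rw [if_neg h, if_neg (fun hc => h (Finset.singleton_inj.1 hc.1))]

lemma dinner_eq (e : OrthonormalBasis (Fin n) ℝ V) (hR : IsCurv R) (H : V → V → ℝ) :
    DF.dinner ((scalDF (ofCurv e R) / 2) • DF.gm n - DF.contrN 1 (ofCurv e R)) (ofBilin e H)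
      = (scalDF (ofCurv e R) / 2) * (∑ x, H (e x) (e x))
        - ∑ j, ∑ k, (∑ i, R (e i) (e j) (e i) (e k)) * H (e j) (e k) := by
  rw [DF.dinner]
  rw [sum_finset_singletons _ (fun S hS => Finset.sum_eq_zero fun T _ => by
    rw [DF.isDeg_zero_of_ne (isDeg_ofBilin e H) (Or.inl hS), mul_zero])]
  rw [show (∑ j : Fin n, ∑ T : Finset (Fin n),
        ((scalDF (ofCurv e R) / 2) • DF.gm n - DF.contrN 1 (ofCurv e R)) {j} T
          * ofBilin e H {j} T)
      = ∑ j : Fin n, ∑ k : Fin n,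
        ((scalDF (ofCurv e R) / 2) • DF.gm n - DF.contrN 1 (ofCurv e R)) {j} {k}
          * ofBilin e H {j} {k} from
    Finset.sum_congr rfl fun j _ => sum_finset_singletons _ (fun T hT => by
      rw [DF.isDeg_zero_of_ne (isDeg_ofBilin e H) (Or.inr hT), mul_zero])]
  have hval : ∀ j k : Fin n,
      ((scalDF (ofCurv e R) / 2) • DF.gm n - DF.contrN 1 (ofCurv e R)) {j} {k}
        * ofBilin e H {j} {k}
      = (if j = k then (scalDF (ofCurv e R) / 2) * H (e j) (e k) else 0)
          - (∑ i, R (e i) (e j) (e i) (e k)) * H (e j) (e k) := by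
    intro j k
    rw [Pi.sub_apply, Pi.sub_apply, Pi.smul_apply, Pi.smul_apply, smul_eq_mul,
      gm_single, DF.contrN, Function.iterate_one, contr_ofCurv e hR, ofBilin_single]
    by_cases h : j = k
    · rw [if_pos h, if_pos h]; ring
    · rw [if_neg h, if_neg h]; ring
  simp_rw [hval]
  rw [Finset.sum_congr rfl (fun j (_ : j ∈ Finset.univ) => Finset.sum_sub_distrib _ _),
    Finset.sum_sub_distrib]
  congr 1
  rw [Finset.mul_sum]
  refine Finset.sum_congr rfl fun j _ => ?_
  rw [Finset.sum_ite_eq, if_pos (Finset.mem_univ j)]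

end Geom3

section Geom4

variable {n : ℕ} {V : Type*} [NormedAddCommGroup V] [InnerProductSpace ℝ V]
variable {R : V → V → V → V → ℝ}

/-! ### Small summation helpers -/

lemma sum_compl_singleton_eq (g : Fin n → ℝ) (w : Fin n) :
    ∑ x ∈ ({w} : Finset (Fin n))ᶜ, g x = (∑ x : Fin n, g x) - g w := by
  have h := Finset.sum_compl_add_sum ({w} : Finset (Fin n)) g
  rw [Finset.sum_singleton] at h
  linarith

lemma sum_compl_singleton_comm (F : Fin n → Fin n → ℝ) :
    ∑ w : Fin n, ∑ x ∈ ({w} : Finset (Fin n))ᶜ, F w x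
      = ∑ x : Fin n, ∑ w ∈ ({x} : Finset (Fin n))ᶜ, F w x := by
  have key : ∀ (G : Fin n → Fin n → ℝ) (w : Fin n),
      (∑ x ∈ ({w} : Finset (Fin n))ᶜ, G w x) = ∑ x : Fin n, if x = w then 0 else G w x := by
    intro G w
    rw [show (∑ x : Fin n, if x = w then 0 else G w x)
        = ∑ x : Fin n, if x ∈ ({w} : Finset (Fin n))ᶜ then G w x else 0 from
      Finset.sum_congr rfl fun x _ => by by_cases h : x = w <;> simp [h]]
    rw [Finset.sum_ite_mem, Finset.univ_inter]
  simp_rw [key]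
  rw [Finset.sum_comm]
  refine Finset.sum_congr rfl fun x _ => ?_
  rw [key (fun a b => F b a) x]
  refine Finset.sum_congr rfl fun w _ => ?_
  by_cases h : x = w
  · subst h; simp
  · rw [if_neg h, if_neg (Ne.symm h)]

lemma sum_powersetCard_one_univ (g : Finset (Fin n) → ℝ) :
    ∑ C ∈ Finset.powersetCard 1 (Finset.univ : Finset (Fin n)), g C = ∑ w : Fin n, g {w} := by
  rw [Finset.powersetCard_one, Finset.sum_map]
  rfl

lemma sum_ite_ne_diag (x : Fin n) (G : Fin n → ℝ) :
    ∑ y : Fin n, (if x = y then 0 else G y) = (∑ y : Fin n, G y) - G x := by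
  rw [Finset.sum_congr rfl (fun y (_ : y ∈ Finset.univ) =>
      show (if x = y then (0 : ℝ) else G y) = G y - (if x = y then G y else 0) from by
        by_cases h : x = y <;> simp [h]),
    Finset.sum_sub_distrib, Finset.sum_ite_eq, if_pos (Finset.mem_univ x)]

lemma neg_one_sign_pair (x w : Fin n) (hxw : x ≠ w) :
    DF.shuffleSign ({w} : Finset (Fin n)) {x} * DF.shuffleSign ({x} : Finset (Fin n)) {w}
      = -1 := by
  rw [DF.shuffleSign_singleton_singleton, DF.shuffleSign_singleton_singleton]
  rcases hxw.lt_or_gt with h | h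
  · rw [if_pos h, if_neg (asymm h)]; ring
  · rw [if_neg (asymm h), if_pos h]; ring

/-! ### The `(2,2)` diagonal values of `ofCurv` -/

lemma ofCurv_pair_diag (e : OrthonormalBasis (Fin n) ℝ V) (hR : IsCurv R) {x w : Fin n}
    (hxw : x ≠ w) : ofCurv e R {x, w} {x, w} = R (e x) (e w) (e x) (e w) := by
  rw [ofCurv_pair e hR hxw hxw]
  by_cases h : w < x <;> simp [h]

/-! ### Computation of `S₂(H·H)` -/

lemma SkD2_HH (e : OrthonormalBasis (Fin n) ℝ V) (H : V → V → ℝ) :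
    DF.SkD 2 (DF.mul (ofBilin e H) (ofBilin e H))
      = (∑ x, H (e x) (e x)) ^ 2 - ∑ x, ∑ y, H (e x) (e y) * H (e y) (e x) := by
  rw [DF.SkD]
  simp_rw [DF.mul_diag_of_isDeg_one _ _ (isDeg_ofBilin e H)]
  -- split the inner sum into `y = x` and `y ≠ x`
  rw [Finset.sum_congr rfl (fun A hA => Finset.sum_congr rfl fun x hx =>
    (Finset.sum_erase_add A _ hx).symm)]
  simp_rw [Finset.sum_add_distrib]
  -- diagonal part
  have hdiag : (∑ A ∈ Finset.powersetCard 2 (Finset.univ : Finset (Fin n)), ∑ x ∈ A,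
      DF.shuffleSign (A.erase x) {x} * DF.shuffleSign (A.erase x) {x}
        * ofBilin e H (A.erase x) (A.erase x) * ofBilin e H {x} {x})
      = (∑ x, H (e x) (e x)) ^ 2 - ∑ w, H (e w) (e w) * H (e w) (e w) := by
    rw [Finset.sum_congr rfl (fun A _ => Finset.sum_congr rfl fun x _ => by
      rw [DF.shuffleSign_mul_self, one_mul])]
    rw [DF.sum_erase_eq_sum_compl 1 (fun B x => ofBilin e H B B * ofBilin e H {x} {x}),
      sum_powersetCard_one_univ (fun C => ∑ x ∈ Cᶜ, ofBilin e H C C * ofBilin e H {x} {x})]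
    rw [Finset.sum_congr rfl (fun w (_ : w ∈ Finset.univ) => by
      rw [← Finset.mul_sum, sum_compl_singleton_eq (fun x => ofBilin e H {x} {x}) w])]
    simp_rw [ofBilin_single]
    rw [Finset.sum_congr rfl (fun w (_ : w ∈ Finset.univ) =>
      show H (e w) (e w) * ((∑ x : Fin n, H (e x) (e x)) - H (e w) (e w))
        = H (e w) (e w) * (∑ x : Fin n, H (e x) (e x)) - H (e w) (e w) * H (e w) (e w) from
      by ring), Finset.sum_sub_distrib, ← Finset.sum_mul]
    ring
  -- off-diagonal part
  have hoff : (∑ A ∈ Finset.powersetCard 2 (Finset.univ : Finset (Fin n)), ∑ x ∈ A,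
      ∑ y ∈ A.erase x, DF.shuffleSign (A.erase x) {x} * DF.shuffleSign (A.erase y) {y}
        * ofBilin e H (A.erase x) (A.erase y) * ofBilin e H {x} {y})
      = (∑ w, H (e w) (e w) * H (e w) (e w)) - ∑ x, ∑ y, H (e x) (e y) * H (e y) (e x) := by
    rw [DF.sum_insert_param 1 (fun A x => ∑ y ∈ A.erase x,
      DF.shuffleSign (A.erase x) {x} * DF.shuffleSign (A.erase y) {y}
        * ofBilin e H (A.erase x) (A.erase y) * ofBilin e H {x} {y})]
    rw [sum_powersetCard_one_univ]
    have step : ∀ w : Fin n, ∀ x ∈ ({w} : Finset (Fin n))ᶜ,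
        (∑ y ∈ (insert x ({w} : Finset (Fin n))).erase x,
          DF.shuffleSign ((insert x ({w} : Finset (Fin n))).erase x) {x}
            * DF.shuffleSign ((insert x ({w} : Finset (Fin n))).erase y) {y}
            * ofBilin e H ((insert x ({w} : Finset (Fin n))).erase x)
                ((insert x ({w} : Finset (Fin n))).erase y)
            * ofBilin e H {x} {y})
        = - (H (e w) (e x) * H (e x) (e w)) := by
      intro w x hx
      have hxw : x ≠ w := by simpa using hx
      have e1 : (insert x ({w} : Finset (Fin n))).erase x = {w} :=
        Finset.erase_insert (by simpa using hxw)
      rw [e1, Finset.sum_singleton]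
      have e2 : (insert x ({w} : Finset (Fin n))).erase w = {x} := by
        rw [Finset.erase_insert_of_ne hxw, Finset.erase_singleton]
        rfl
      rw [e2, ofBilin_single, ofBilin_single]
      have h3 := neg_one_sign_pair x w hxw
      linear_combination (H (e w) (e x) * H (e x) (e w)) * h3
    rw [Finset.sum_congr rfl (fun w (_ : w ∈ Finset.univ) => Finset.sum_congr rfl (step w))]
    rw [Finset.sum_congr rfl (fun w (_ : w ∈ Finset.univ) => by
      rw [sum_compl_singleton_eq (fun x => -(H (e w) (e x) * H (e x) (e w))) w])]
    rw [Finset.sum_sub_distrib]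
    simp only [Finset.sum_neg_distrib, sub_neg_eq_add]
    ring
  rw [hdiag, hoff]
  ring

end Geom4

section Geom5

variable {n : ℕ} {V : Type*} [NormedAddCommGroup V] [InnerProductSpace ℝ V]
variable {R : V → V → V → V → ℝ}

lemma r_swap_pairs (hR : IsCurv R) (a b c d : V) : R a b c d = R b a d c := by
  have h1 := hR.antisymm a b c d
  have h2 := r_swap2 hR b a c d
  linarith

lemma sum_compl_eq_sub (s : Finset (Fin n)) (g : Fin n → ℝ) :
    ∑ x ∈ sᶜ, g x = (∑ x : Fin n, g x) - ∑ x ∈ s, g x := by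
  have := Finset.sum_compl_add_sum s g
  linarith

lemma sum_compl_eq_ite (s : Finset (Fin n)) (g : Fin n → ℝ) :
    ∑ x ∈ sᶜ, g x = ∑ x : Fin n, if x ∈ s then 0 else g x := by
  rw [show (∑ x : Fin n, if x ∈ s then 0 else g x)
      = ∑ x : Fin n, if x ∈ sᶜ then g x else 0 from
    Finset.sum_congr rfl fun x _ => by by_cases h : x ∈ s <;> simp [h]]
  rw [Finset.sum_ite_mem, Finset.univ_inter]

lemma combo_val (e : OrthonormalBasis (Fin n) ℝ V) (hR : IsCurv R) {x y z : Fin n}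
    (hxy : x ≠ y) (hxz : x ≠ z) (hyz : y ≠ z) :
    DF.shuffleSign ({y, z} : Finset (Fin n)) {x}
      * DF.shuffleSign ({x, z} : Finset (Fin n)) {y} * ofCurv e R {y, z} {x, z}
      = - R (e y) (e z) (e x) (e z) := by
  rw [DF.shuffleSign_pair_singleton x hyz, DF.shuffleSign_pair_singleton y hxz,
    ofCurv_pair e hR hyz hxz]
  rcases hxy.lt_or_gt with h1 | h1 <;> rcases hxz.lt_or_gt with h2 | h2 <;>
    rcases hyz.lt_or_gt with h3 | h3 <;>
    simp [h1, h2, h3, lt_asymm h1, lt_asymm h2, lt_asymm h3]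

lemma SkD3_RH (e : OrthonormalBasis (Fin n) ℝ V) (hR : IsCurv R) (H : V → V → ℝ) :
    DF.SkD 3 (DF.mul (ofCurv e R) (ofBilin e H))
      = DF.SkD 2 (ofCurv e R) * (∑ x, H (e x) (e x))
        - ∑ j, ∑ k, (∑ i, R (e i) (e j) (e i) (e k)) * H (e j) (e k) := by
  rw [DF.SkD]
  simp_rw [DF.mul_diag_of_isDeg_one _ _ (isDeg_ofBilin e H)]
  rw [Finset.sum_congr rfl (fun A hA => Finset.sum_congr rfl fun x hx =>
    (Finset.sum_erase_add A _ hx).symm)]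
  simp_rw [Finset.sum_add_distrib]
  have hdiag : (∑ A ∈ Finset.powersetCard 3 (Finset.univ : Finset (Fin n)), ∑ x ∈ A,
      DF.shuffleSign (A.erase x) {x} * DF.shuffleSign (A.erase x) {x}
        * ofCurv e R (A.erase x) (A.erase x) * ofBilin e H {x} {x})
      = DF.SkD 2 (ofCurv e R) * (∑ x, H (e x) (e x))
        - ∑ x, (∑ i, R (e i) (e x) (e i) (e x)) * H (e x) (e x) := by
    rw [Finset.sum_congr rfl (fun A _ => Finset.sum_congr rfl fun x _ => by
      rw [DF.shuffleSign_mul_self, one_mul])]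
    rw [DF.sum_erase_eq_sum_compl 2 (fun B x => ofCurv e R B B * ofBilin e H {x} {x})]
    rw [Finset.sum_congr rfl (fun B (_ : B ∈ Finset.powersetCard 2 Finset.univ) => by
      rw [← Finset.mul_sum, sum_compl_eq_sub B (fun x => ofBilin e H {x} {x})])]
    simp_rw [mul_sub]
    rw [Finset.sum_sub_distrib]
    congr 1
    · rw [← Finset.sum_mul, DF.SkD]
      congr 1
      · exact Finset.sum_congr rfl fun x _ => by rw [ofBilin_single]
    · rw [Finset.sum_congr rfl (fun B (_ : B ∈ Finset.powersetCard 2 Finset.univ) =>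
        Finset.mul_sum B (fun x => ofBilin e H {x} {x}) (ofCurv e R B B))]
      rw [DF.sum_insert_param 1 (fun A x => ofCurv e R A A * ofBilin e H {x} {x})]
      rw [sum_powersetCard_one_univ (fun C => ∑ x ∈ Cᶜ,
        ofCurv e R (insert x C) (insert x C) * ofBilin e H {x} {x})]
      rw [Finset.sum_congr rfl (fun w (_ : w ∈ Finset.univ) =>
        Finset.sum_congr rfl (fun x hx => by
          rw [ofCurv_pair_diag e hR (show x ≠ w by simpa using hx), ofBilin_single]))]
      rw [sum_compl_singleton_comm (fun w x => R (e x) (e w) (e x) (e w) * H (e x) (e x))]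
      refine Finset.sum_congr rfl fun x _ => ?_
      rw [Finset.sum_congr rfl (fun w (_ : w ∈ ({x} : Finset (Fin n))ᶜ) => by
        rw [r_swap_pairs hR (e x) (e w) (e x) (e w)])]
      rw [sum_compl_singleton_eq (fun w => R (e w) (e x) (e w) (e x) * H (e x) (e x)) x]
      rw [r_zero1 hR, zero_mul, sub_zero, Finset.sum_mul]
  have hoff : (∑ A ∈ Finset.powersetCard 3 (Finset.univ : Finset (Fin n)), ∑ x ∈ A,
      ∑ y ∈ A.erase x,
      DF.shuffleSign (A.erase x) {x} * DF.shuffleSign (A.erase y) {y}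
        * ofCurv e R (A.erase x) (A.erase y) * ofBilin e H {x} {y})
      = (∑ x, (∑ i, R (e i) (e x) (e i) (e x)) * H (e x) (e x))
        - ∑ j, ∑ k, (∑ i, R (e i) (e j) (e i) (e k)) * H (e j) (e k) := by
    rw [DF.sum_insert_param 2 (fun A x => ∑ y ∈ A.erase x,
      DF.shuffleSign (A.erase x) {x} * DF.shuffleSign (A.erase y) {y}
        * ofCurv e R (A.erase x) (A.erase y) * ofBilin e H {x} {y})]
    rw [Finset.sum_congr rfl (fun B (_ : B ∈ Finset.powersetCard 2 Finset.univ) =>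
      Finset.sum_congr rfl (fun x hx => by
        rw [Finset.erase_insert (Finset.mem_compl.1 hx)]))]
    rw [Finset.sum_congr rfl (fun B (_ : B ∈ Finset.powersetCard 2 Finset.univ) =>
      Finset.sum_comm)]
    rw [DF.sum_insert_param 1 (fun B y => ∑ x ∈ Bᶜ,
      DF.shuffleSign B {x} * DF.shuffleSign ((insert x B).erase y) {y}
        * ofCurv e R B ((insert x B).erase y) * ofBilin e H {x} {y})]
    rw [sum_powersetCard_one_univ (fun C => ∑ y ∈ Cᶜ, ∑ x ∈ (insert y C)ᶜ,
      DF.shuffleSign (insert y C) {x}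
        * DF.shuffleSign ((insert x (insert y C)).erase y) {y}
        * ofCurv e R (insert y C) ((insert x (insert y C)).erase y) * ofBilin e H {x} {y})]
    -- evaluate the summand for pairwise distinct x, y, z
    rw [Finset.sum_congr rfl (fun z (_ : z ∈ Finset.univ) =>
      Finset.sum_congr rfl (fun y hy => Finset.sum_congr rfl (fun x hx => by
        have hyz : y ≠ z := by simpa using hy
        have hx' : x ≠ y ∧ x ≠ z := by simpa using hx
        have e2 : (insert x (insert y ({z} : Finset (Fin n)))).erase y
            = insert x {z} := by
          rw [Finset.erase_insert_of_ne hx'.1, Finset.erase_insert (by simpa using hyz)]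
        rw [e2, ofBilin_single])))]
    rw [Finset.sum_congr rfl (fun z (_ : z ∈ Finset.univ) =>
      Finset.sum_congr rfl (fun y hy => Finset.sum_congr rfl (fun x hx => by
        have hyz : y ≠ z := by simpa using hy
        have hx' : x ≠ y ∧ x ≠ z := by simpa using hx
        exact congrArg (fun t => t * H (e x) (e y))
          (combo_val e hR hx'.1 hx'.2 hyz))))]
    -- now reorganize the triple sum with unrestricted indices
    rw [Finset.sum_congr rfl (fun z (_ : z ∈ Finset.univ) =>
      Finset.sum_congr rfl (fun y (_ : y ∈ ({z} : Finset (Fin n))ᶜ) =>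
        sum_compl_eq_ite (insert y ({z} : Finset (Fin n)))
          (fun x => - R (e y) (e z) (e x) (e z) * H (e x) (e y))))]
    simp_rw [Finset.mem_insert, Finset.mem_singleton]
    rw [Finset.sum_congr rfl (fun z (_ : z ∈ Finset.univ) =>
      sum_compl_eq_ite ({z} : Finset (Fin n)) _)]
    simp_rw [Finset.mem_singleton]
    rw [Finset.sum_comm]
    rw [Finset.sum_congr rfl (fun y (_ : y ∈ Finset.univ) => Finset.sum_congr rfl
      (fun z (_ : z ∈ Finset.univ) =>
        show (if y = z then (0:ℝ) else ∑ x : Fin n, if x = y ∨ x = z then 0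
            else - R (e y) (e z) (e x) (e z) * H (e x) (e y))
          = ∑ x : Fin n, if y = z then 0 else if x = y ∨ x = z then 0
            else - R (e y) (e z) (e x) (e z) * H (e x) (e y) from by
          by_cases h : y = z
          · rw [if_pos h]
            exact (Finset.sum_eq_zero fun x _ => if_pos h).symm
          · rw [if_neg h]
            exact Finset.sum_congr rfl fun x _ => (if_neg h).symm))]
    rw [Finset.sum_congr rfl (fun y (_ : y ∈ Finset.univ) => Finset.sum_comm)]
    -- per (y, x) compute the inner z-sum
    have hinner : ∀ y x : Fin n,
        (∑ z : Fin n, if y = z then 0 else if x = y ∨ x = z then 0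
            else - R (e y) (e z) (e x) (e z) * H (e x) (e y))
        = if y = x then 0 else - ((∑ i, R (e i) (e x) (e i) (e y)) * H (e x) (e y)) := by
      intro y x
      by_cases hxy : x = y
      · rw [if_pos hxy.symm]
        refine Finset.sum_eq_zero fun z _ => ?_
        by_cases h : y = z
        · rw [if_pos h]
        · rw [if_neg h, if_pos (Or.inl hxy)]
      · rw [if_neg (Ne.symm hxy)]
        have hz : ∀ z : Fin n, (if y = z then (0:ℝ) else if x = y ∨ x = z then 0
              else - R (e y) (e z) (e x) (e z) * H (e x) (e y))
            = - R (e z) (e x) (e z) (e y) * H (e x) (e y) := by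
          intro z
          by_cases h1 : y = z
          · rw [if_pos h1, ← h1, r_zero2 hR (e y) (e x) (e y)]; ring
          · by_cases h2 : x = z
            · rw [if_neg h1, if_pos (Or.inr h2), ← h2, r_zero1 hR (e x) (e x) (e y)]; ring
            · rw [if_neg h1, if_neg (not_or.2 ⟨hxy, h2⟩)]
              have hq : R (e y) (e z) (e x) (e z) = R (e z) (e x) (e z) (e y) := by
                rw [hR.pair_symm (e y) (e z) (e x) (e z)]
                exact r_swap_pairs hR (e x) (e z) (e y) (e z)
              rw [hq]
        rw [Finset.sum_congr rfl (fun z _ => hz z)]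
        simp_rw [neg_mul, Finset.sum_neg_distrib, Finset.sum_mul]
    simp_rw [hinner]
    rw [Finset.sum_congr rfl (fun y (_ : y ∈ Finset.univ) =>
      sum_ite_ne_diag y (fun x => - ((∑ i, R (e i) (e x) (e i) (e y)) * H (e x) (e y))))]
    rw [Finset.sum_sub_distrib]
    simp_rw [Finset.sum_neg_distrib]
    have hcomm : (∑ y : Fin n, ∑ x : Fin n, (∑ i, R (e i) (e x) (e i) (e y)) * H (e x) (e y))
        = ∑ j : Fin n, ∑ k : Fin n, (∑ i, R (e i) (e j) (e i) (e k)) * H (e j) (e k) :=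
      Finset.sum_comm
    linarith [hcomm]
  rw [hdiag, hoff]
  ring

end Geom5

section Geom6

variable {n : ℕ} {V : Type*} [NormedAddCommGroup V] [InnerProductSpace ℝ V]

lemma two_mul_sum_powersetCard_two (g : Finset (Fin n) → ℝ) :
    2 * ∑ B ∈ Finset.powersetCard 2 (Finset.univ : Finset (Fin n)), g B
      = ∑ w : Fin n, ∑ x ∈ ({w} : Finset (Fin n))ᶜ, g (insert x {w}) := by
  have h := DF.sum_insert_param (n := n) 1 (fun A _ => g A)
  rw [show (1 + 1) = 2 from rfl] at h
  rw [sum_powersetCard_one_univ (fun C => ∑ x ∈ Cᶜ, g (insert x C))] at h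
  rw [← h, Finset.mul_sum]
  refine Finset.sum_congr rfl fun A hA => ?_
  rw [Finset.sum_const, Finset.mem_powersetCard_univ.1 hA, nsmul_eq_mul, Nat.cast_ofNat]

lemma sigma_two_eq (e : OrthonormalBasis (Fin n) ℝ V) (H : V → V → ℝ)
    (hsymm : IsSymmBilin H) :
    DF.sigma 2 (ofBilin e H)
      = ((∑ x, H (e x) (e x)) ^ 2 - ∑ x, ∑ y, H (e x) (e y) * H (e y) (e x)) / 2 := by
  have hM : ∀ i j, (Matrix.of fun i j => ofBilin e H {i} {j} : Matrix (Fin n) (Fin n) ℝ) i j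
      = H (e i) (e j) := fun i j => by
    rw [Matrix.of_apply, ofBilin_single]
  have hH : (Matrix.of fun i j => ofBilin e H {i} {j} : Matrix (Fin n) (Fin n) ℝ).IsHermitian := by
    rw [Matrix.IsHermitian]
    ext i j
    rw [Matrix.conjTranspose_apply, hM, hM, star_trivial, hsymm (e j) (e i)]
  rw [DF.sigma, dif_pos hH]
  set lam := hH.eigenvalues with hlam
  set M := (Matrix.of fun i j => ofBilin e H {i} {j} : Matrix (Fin n) (Fin n) ℝ) with hMdef
  set U := (hH.eigenvectorUnitary : Matrix (Fin n) (Fin n) ℝ) with hU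
  have hu : star U * U = 1 := Matrix.mem_unitaryGroup_iff'.mp hH.eigenvectorUnitary.2
  have hDiag : (Matrix.diagonal (RCLike.ofReal ∘ lam) : Matrix (Fin n) (Fin n) ℝ)
      = Matrix.diagonal lam := by
    rw [RCLike.ofReal_real_eq_id]; rfl
  have hspec : M = U * Matrix.diagonal lam * star U := by
    have := hH.spectral_theorem
    rwa [hDiag] at this
  -- trace identities
  have htr : Matrix.trace M = ∑ i, lam i := by
    rw [hspec, Matrix.trace_mul_cycle, hu, Matrix.one_mul, Matrix.trace_diagonal]
  have htr2 : Matrix.trace (M * M) = ∑ i, lam i * lam i := by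
    have hMM : M * M = U * (Matrix.diagonal lam * Matrix.diagonal lam) * star U := by
      rw [hspec]
      rw [show U * Matrix.diagonal lam * star U * (U * Matrix.diagonal lam * star U)
          = U * Matrix.diagonal lam * (star U * U) * Matrix.diagonal lam * star U by
        simp only [Matrix.mul_assoc]]
      rw [hu, Matrix.mul_one]
      simp only [Matrix.mul_assoc]
    rw [hMM, Matrix.trace_mul_cycle, hu, Matrix.one_mul,
      Matrix.diagonal_mul_diagonal, Matrix.trace_diagonal]
  have htrace_val : Matrix.trace M = ∑ x, H (e x) (e x) := by
    rw [Matrix.trace]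
    exact Finset.sum_congr rfl fun i _ => hM i i
  have htrace2_val : Matrix.trace (M * M) = ∑ x, ∑ y, H (e x) (e y) * H (e y) (e x) := by
    rw [Matrix.trace]
    refine Finset.sum_congr rfl fun i _ => ?_
    rw [Matrix.diag_apply, Matrix.mul_apply]
    exact Finset.sum_congr rfl fun j _ => by rw [hM, hM]
  -- e₂ of the eigenvalues
  have he2 : 2 * (∑ s ∈ Finset.powersetCard 2 (Finset.univ : Finset (Fin n)),
      ∏ i ∈ s, lam i) = (∑ i, lam i) ^ 2 - ∑ i, lam i * lam i := by
    rw [two_mul_sum_powersetCard_two (fun s => ∏ i ∈ s, lam i)]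
    rw [Finset.sum_congr rfl (fun w (_ : w ∈ Finset.univ) =>
      Finset.sum_congr rfl (fun x hx =>
        Finset.prod_pair (show x ≠ w by simpa using hx)))]
    rw [Finset.sum_congr rfl (fun w (_ : w ∈ Finset.univ) => by
      rw [← Finset.sum_mul, sum_compl_singleton_eq lam w])]
    rw [Finset.sum_congr rfl (fun w (_ : w ∈ Finset.univ) =>
      show ((∑ x : Fin n, lam x) - lam w) * lam w
        = (∑ x : Fin n, lam x) * lam w - lam w * lam w from by ring)]
    rw [Finset.sum_sub_distrib, ← Finset.mul_sum]
    ring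
  have e1 : (∑ i, lam i) = ∑ x, H (e x) (e x) := htr.symm.trans htrace_val
  have e2 : (∑ i, lam i * lam i) = ∑ x, ∑ y, H (e x) (e y) * H (e y) (e x) :=
    htr2.symm.trans htrace2_val
  rw [e1, e2] at he2
  linarith [he2]

end Geom6

/-- **algebraic conformal transformation rule for h₄.** For an algebraic
curvature tensor `R` and a symmetric bilinear form `H` on an `n`-dimensional real inner
product space (`n ≥ 4`), with Einstein tensor `T₂ = h₂·g − cR`,
`h₄(R − gH) = h₄(R) − 2(n−3)·⟨T₂, H⟩ + 2(n−2)(n−3)·σ₂(H)`. -/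
theorem stmt17_conformal_transformation_of_h4
    (n : ℕ) (hn : 4 ≤ n)
    (V : Type*) [NormedAddCommGroup V] [InnerProductSpace ℝ V]
    (hV : Module.finrank ℝ V = n)
    (e : OrthonormalBasis (Fin n) ℝ V)
    (R : V → V → V → V → ℝ) (hR : IsCurv R)
    (H : V → V → ℝ) (hbil : IsBilin H) (hsymm : IsSymmBilin H) :
    h4DF (ofCurv e R - DF.mul (DF.gm n) (ofBilin e H)) =
      h4DF (ofCurv e R)
      - 2 * ((n : ℝ) - 3) *
          DF.dinner ((scalDF (ofCurv e R) / 2) • DF.gm n - DF.contrN 1 (ofCurv e R))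
            (ofBilin e H)
      + 2 * ((n : ℝ) - 2) * ((n : ℝ) - 3) * DF.sigma 2 (ofBilin e H) := by
  have hn3 : ((n - 3 : ℕ) : ℝ) = (n : ℝ) - 3 := by
    rw [Nat.cast_sub (by omega)]; norm_num
  have hn2 : ((n - 2 : ℕ) : ℝ) = (n : ℝ) - 2 := by
    rw [Nat.cast_sub (by omega)]; norm_num
  set Rd := ofCurv e R with hRdd
  set Hd := ofBilin e H with hHdd
  set G := DF.mul (DF.gm n) Hd with hGdd
  have hRdeg : DF.IsDeg 2 Rd := isDeg_ofCurv e R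
  have hHdeg : DF.IsDeg 1 Hd := isDeg_ofBilin e H
  have hGdeg : DF.IsDeg 2 G := DF.isDeg_mul (DF.isDeg_gm) hHdeg
  rw [h4DF_eq_SkD, h4DF_eq_SkD]
  have expand : DF.SkD 4 (DF.mul (Rd - G) (Rd - G))
      = DF.SkD 4 (DF.mul Rd Rd) - DF.SkD 4 (DF.mul Rd G) - DF.SkD 4 (DF.mul G Rd)
        + DF.SkD 4 (DF.mul G G) := by
    rw [DF.mul_sub_left, DF.mul_sub_right, DF.mul_sub_right, DF.SkD_sub, DF.SkD_sub,
      DF.SkD_sub]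
    ring
  have hS3eq : DF.SkD 3 (DF.mul Rd Hd)
      = DF.dinner ((scalDF Rd / 2) • DF.gm n - DF.contrN 1 Rd) Hd := by
    rw [SkD3_RH e hR H, dinner_eq e hR H, scalDF_eq_SkD]
    ring
  have hS2eq : DF.SkD 2 (DF.mul Hd Hd) = 2 * DF.sigma 2 Hd := by
    rw [SkD2_HH e H, sigma_two_eq e H hsymm]
    ring
  have key : DF.mul Rd G = DF.mul (DF.gm n) (DF.mul Rd Hd) := by
    rw [hGdd, ← DF.mul_assoc', DF.mul_comm_of_isDeg hRdeg DF.isDeg_gm, DF.mul_assoc']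
  have hcross : DF.SkD 4 (DF.mul Rd G)
      = ((n : ℝ) - 3) * DF.dinner ((scalDF Rd / 2) • DF.gm n - DF.contrN 1 Rd) Hd := by
    rw [key, show (4 : ℕ) = 3 + 1 from rfl, DF.SkD_gm_mul 3, hS3eq, hn3]
  have hcross2 : DF.SkD 4 (DF.mul G Rd)
      = ((n : ℝ) - 3) * DF.dinner ((scalDF Rd / 2) • DF.gm n - DF.contrN 1 Rd) Hd := by
    rw [DF.mul_comm_of_isDeg hGdeg hRdeg]
    exact hcross
  have k2a : DF.mul G G = DF.mul (DF.gm n) (DF.mul Hd G) := by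
    rw [hGdd, DF.mul_assoc']
  have k2b : DF.mul Hd G = DF.mul (DF.gm n) (DF.mul Hd Hd) := by
    rw [hGdd, ← DF.mul_assoc', DF.mul_comm_of_isDeg hHdeg DF.isDeg_gm, DF.mul_assoc']
  have hsq : DF.SkD 4 (DF.mul G G)
      = 2 * ((n : ℝ) - 2) * ((n : ℝ) - 3) * DF.sigma 2 Hd := by
    rw [k2a, show (4 : ℕ) = 3 + 1 from rfl, DF.SkD_gm_mul 3, k2b,
      show (3 : ℕ) = 2 + 1 from rfl, DF.SkD_gm_mul 2, hS2eq, hn3, hn2]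
    ring
  rw [expand, hcross, hcross2, hsq]
  ring
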